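/- arXiv:1201.4122 — 3 statements merged into one kernel-verified Lean document; each statement's English description precedes it below -/
import Mathlib

section
/- Characterization of vanishing low-loss damping coefficients (Proposition 2, statements 3 and 4). Let u ∈ ker B be a unit vector and ρ ∈ ℝ be such that P_B^⊥ Ω u = ρ u (i.e., u is an eigenvector of Ω₁ with eigenvalue ρ), and set d := (u, Θ* B₂⁻¹ Θ u). Then: (a) Ω u = ρ u if and only if d = 0; (b) Ω u = 0 if and only if both ρ = 0 and d = 0. -/
noncomputable section

variable {H : Type*} [NormedAddCommGroup H] [InnerProductSpace ℂ H] [FiniteDimensional ℂ H]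

/-- Quadratic trick: if `0 ≤ 2*t*a + t^2*c` for all real `t`, with `a, c ≥ 0`, then `a = 0`. -/
lemma quad_aux {a c : ℝ} (ha : 0 ≤ a) (hc : 0 ≤ c)
    (h : ∀ t : ℝ, 0 ≤ 2 * t * a + t ^ 2 * c) : a = 0 := by
  by_contra hne
  have ha' : 0 < a := lt_of_le_of_ne ha (Ne.symm hne)
  have hc1 : 0 < c + 1 := by linarith
  have h2 : 0 ≤ (2 * (-(a / (c + 1))) * a + (-(a / (c + 1))) ^ 2 * c) * (c + 1) ^ 2 :=
    mul_nonneg (h _) (by positivity)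
  have h3 : (2 * (-(a / (c + 1))) * a + (-(a / (c + 1))) ^ 2 * c) * (c + 1) ^ 2
      = -(2 * a ^ 2 * (c + 1)) + a ^ 2 * c := by
    field_simp
  rw [h3] at h2
  nlinarith [mul_pos ha' ha', mul_nonneg (mul_nonneg ha ha) hc]

/-- For a self-adjoint positive semidefinite operator, `⟪y, B y⟫ = 0` implies `B y = 0`. -/
lemma psd_apply_eq_zero (B : H →L[ℂ] H) (hB : IsSelfAdjoint B)
    (hBpos : ∀ x : H, 0 ≤ (inner ℂ x (B x) : ℂ).re)
    (y : H) (h : (inner ℂ y (B y) : ℂ) = 0) : B y = 0 := by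
  have hsymm : ∀ a b : H, (inner ℂ (B a) b : ℂ) = inner ℂ a (B b) :=
    (ContinuousLinearMap.isSelfAdjoint_iff_isSymmetric.mp hB)
  set z := B y with hz
  have key : ∀ t : ℝ, 0 ≤ 2 * t * (‖z‖ ^ 2) + t ^ 2 * (inner ℂ z (B z) : ℂ).re := by
    intro t
    have h0 := hBpos (y + (t : ℂ) • z)
    have hexp : (inner ℂ (y + (t : ℂ) • z) (B (y + (t : ℂ) • z)) : ℂ)
        = inner ℂ y (B y) + (t : ℂ) * inner ℂ y (B z) + (t : ℂ) * inner ℂ z (B y)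
          + (t : ℂ) * (t : ℂ) * inner ℂ z (B z) := by
      rw [map_add, map_smul]
      simp only [inner_add_add_self, inner_add_left, inner_add_right, inner_smul_left,
        inner_smul_right]
      push_cast
      ring_nf
      simp [Complex.conj_ofReal]
      ring
    have hyBz : (inner ℂ y (B z) : ℂ) = ((‖z‖ ^ 2 : ℝ) : ℂ) := by
      rw [← hsymm y z, ← hz, inner_self_eq_norm_sq_to_K]; norm_cast
    have hzBy : (inner ℂ z (B y) : ℂ) = ((‖z‖ ^ 2 : ℝ) : ℂ) := by
      rw [← hz, inner_self_eq_norm_sq_to_K]; norm_cast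
    rw [hexp, h, hyBz, hzBy] at h0
    simp only [Complex.add_re, Complex.mul_re, Complex.ofReal_re, Complex.ofReal_im,
      Complex.zero_re, mul_zero, sub_zero, zero_add] at h0
    ring_nf at h0 ⊢
    simp only [← Complex.ofReal_pow, Complex.ofReal_im, mul_zero, sub_zero, zero_mul,
      Complex.ofReal_re] at h0 ⊢
    linarith
  have hre : 0 ≤ (inner ℂ z (B z) : ℂ).re := hBpos z
  have hnz : ‖z‖ ^ 2 = 0 := quad_aux (by positivity) hre key
  have : ‖z‖ = 0 := by nlinarith [norm_nonneg z]
  simpa [hz] using norm_eq_zero.mp this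

/-- **Proposition 2, parts 3 and 4: vanishing low-loss damping.**
Let `u ∈ ker B` be a unit vector which is an eigenvector of the compression
`Ω₁ = P_B^⊥ Ω P_B^⊥` with real eigenvalue `ρ`, i.e. `Ω u − P_B Ω u = ρ u`
(here `P_B` is the orthogonal projection onto `H_B = ran B`).  Let
`y = B₂⁻¹ Θ u`, i.e. the unique `y ∈ ran B` with `B y = P_B Ω u`, and let
`d = (u, Θ* B₂⁻¹ Θ u) = (P_B Ω u, y)`.  Then
(a) `Ω u = ρ u ↔ d = 0`, and (b) `Ω u = 0 ↔ (ρ = 0 ∧ d = 0)`. -/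
theorem statement4
    (Ω B : H →L[ℂ] H) (hΩ : IsSelfAdjoint Ω) (hB : IsSelfAdjoint B)
    (hBpos : ∀ x : H, 0 ≤ (inner ℂ x (B x) : ℂ).re)
    (hNB_pos : 0 < Module.finrank ℂ (LinearMap.range (B : H →ₗ[ℂ] H)))
    (hNB_lt : Module.finrank ℂ (LinearMap.range (B : H →ₗ[ℂ] H)) < Module.finrank ℂ H)
    (u : H) (hu : B u = 0) (hu1 : ‖u‖ = 1)
    (ρ : ℝ)
    (hρ : Ω u - (Submodule.orthogonalProjectionOnto (LinearMap.range (B : H →ₗ[ℂ] H)) (Ω u) : H) = (ρ : ℂ) • u)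
    (y : H) (hy : y ∈ LinearMap.range (B : H →ₗ[ℂ] H))
    (hBy : B y = (Submodule.orthogonalProjectionOnto (LinearMap.range (B : H →ₗ[ℂ] H)) (Ω u) : H))
    (d : ℝ)
    (hd : (d : ℂ) = inner ℂ ((Submodule.orthogonalProjectionOnto (LinearMap.range (B : H →ₗ[ℂ] H)) (Ω u) : H)) y) :
    (Ω u = (ρ : ℂ) • u ↔ d = 0) ∧ (Ω u = 0 ↔ (ρ = 0 ∧ d = 0)) := by
  have hsymm : ∀ a b : H, (inner ℂ (B a) b : ℂ) = inner ℂ a (B b) :=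
    (ContinuousLinearMap.isSelfAdjoint_iff_isSymmetric.mp hB)
  set w : H := (Submodule.orthogonalProjectionOnto (LinearMap.range (B : H →ₗ[ℂ] H)) (Ω u) : H) with hw
  -- d = ⟪B y, y⟫
  have hdBy : (d : ℂ) = inner ℂ (B y) y := by rw [hd, hBy]
  -- w = 0 ↔ d = 0
  have hw_iff : w = 0 ↔ d = 0 := by
    constructor
    · intro h0
      have : (d : ℂ) = 0 := by rw [hd, h0, inner_zero_left]
      exact_mod_cast this
    · intro h0
      have hyBy : (inner ℂ y (B y) : ℂ) = 0 := by
        have : (inner ℂ (B y) y : ℂ) = 0 := by rw [← hdBy, h0]; norm_num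
        rw [← inner_conj_symm, this, map_zero]
      have := psd_apply_eq_zero B hB hBpos y hyBy
      rw [← hBy, this]
  -- Ω u = ρ u + w
  have hdecomp : Ω u = (ρ : ℂ) • u + w := by
    rw [← hρ]; abel
  -- u ⊥ w
  have huw : (inner ℂ u w : ℂ) = 0 := by
    obtain ⟨x, hx⟩ := SetLike.coe_mem (Submodule.orthogonalProjectionOnto (LinearMap.range (B : H →ₗ[ℂ] H)) (Ω u))
    rw [hw, ← hx, ContinuousLinearMap.coe_coe, ← hsymm u x, hu, inner_zero_left]
  constructor
  · constructor
    · intro h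
      have : w = 0 := by
        have := hdecomp.symm.trans h
        simpa using this
      exact hw_iff.mp this
    · intro h
      rw [hdecomp, hw_iff.mpr h, add_zero]
  · constructor
    · intro h
      have hw0 : (inner ℂ u (Ω u) : ℂ) = (ρ : ℂ) := by
        rw [hdecomp, inner_add_right, inner_smul_right, huw, add_zero,
          inner_self_eq_norm_sq_to_K, hu1]
        norm_num
      have hρ0 : (ρ : ℂ) = 0 := by rw [← hw0, h, inner_zero_right]
      have hρ0' : ρ = 0 := by exact_mod_cast hρ0
      have hwz : w = 0 := by
        have := hdecomp.symm.trans h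
        rw [hρ0] at this
        simpa using this
      exact ⟨hρ0', hw_iff.mp hwz⟩
    · rintro ⟨h1, h2⟩
      rw [hdecomp, hw_iff.mpr h2, h1]
      simp
end
end

section
/- Computing the expansion coefficients under simple spectrum (Corollary 2). (1) If the operator B₂ has N_B distinct eigenvalues, then for every Theorem-1 family the multiset {ζ̊_1, …, ζ̊_{N_B}} equals the set of eigenvalues of B₂, and for each 1 ≤ j ≤ N_B and every unit vector u ∈ H_B with B₂ u = ζ̊_j u one has ρ_j = (u, Ω u); thus the values ζ̊_j and ρ_j are uniquely determined by B₂ and Ω. (2) If the operator Ω₁ has N − N_B distinct eigenvalues, then for every Theorem-1 family the multiset {ρ_{N_B+1}, …, ρ_N} equals the set of eigenvalues of Ω₁, and for each N_B+1 ≤ j ≤ N and every unit vector u ∈ H_B^⊥ with Ω₁ u = ρ_j u one has d_j = (u, Θ* B₂⁻¹ Θ u); thus the values ρ_j and d_j are uniquely determined by Ω₁, Θ and B₂. -/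
open Filter Asymptotics

noncomputable section

variable {H : Type*} [NormedAddCommGroup H] [InnerProductSpace ℂ H] [FiniteDimensional ℂ H]

/-- The system operator `A(β) = Ω − iβB`. -/
def sysOp (Ω B : H →L[ℂ] H) (β : ℝ) : H →L[ℂ] H :=
  Ω - (Complex.I * (β : ℂ)) • B

/-- A *Theorem-1 family* for the system operator `A(β) = Ω − iβB` in the high-loss
regime: a threshold `β₀ > 0`; an orthonormal family `ẘ_j` whose first `N_B` members
are eigenvectors of `B` in the loss subspace `H_B = ran B` with positive eigenvalues
`ζ̊_j` and whose remaining members lie in the no-loss subspace `ker B`; vectors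
`w_j^{(−1)}`; and eigenvalue/eigenvector branches `ζ_j(β)`, `w_j(β)` of `A(β)`
(forming a basis, so `A(β)` is diagonalizable for `β > β₀`) with the stated
asymptotic expansions as `β → ∞`, where `ρ_j = (ẘ_j, Ω ẘ_j)` and
`d_j = (w_j^{(−1)}, B w_j^{(−1)})`. -/
structure Thm1Family (Ω B : H →L[ℂ] H) where
  β₀ : ℝ
  β₀_pos : 0 < β₀
  w0 : Fin (Module.finrank ℂ H) → H
  ζ0 : Fin (Module.finrank ℂ H) → ℝ
  wneg : Fin (Module.finrank ℂ H) → H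
  ζ : Fin (Module.finrank ℂ H) → ℝ → ℂ
  w : Fin (Module.finrank ℂ H) → ℝ → H
  orth : Orthonormal ℂ w0
  ζ0_pos : ∀ j : Fin (Module.finrank ℂ H),
    (j : ℕ) < Module.finrank ℂ (LinearMap.range (B : H →ₗ[ℂ] H)) → 0 < ζ0 j
  eig0_high : ∀ j : Fin (Module.finrank ℂ H),
    (j : ℕ) < Module.finrank ℂ (LinearMap.range (B : H →ₗ[ℂ] H)) → B (w0 j) = (ζ0 j : ℂ) • w0 j
  eig0_low : ∀ j : Fin (Module.finrank ℂ H),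
    Module.finrank ℂ (LinearMap.range (B : H →ₗ[ℂ] H)) ≤ (j : ℕ) → B (w0 j) = 0
  eig : ∀ β : ℝ, β₀ < β → ∀ j, sysOp Ω B β (w j β) = ζ j β • w j β
  indep : ∀ β : ℝ, β₀ < β → LinearIndependent ℂ fun j => w j β
  ζ_high : ∀ j : Fin (Module.finrank ℂ H),
    (j : ℕ) < Module.finrank ℂ (LinearMap.range (B : H →ₗ[ℂ] H)) →
      (fun β : ℝ => ζ j β - (-Complex.I * (ζ0 j : ℂ) * (β : ℂ)
          + ((inner ℂ (w0 j) (Ω (w0 j)) : ℂ).re : ℂ)))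
        =O[atTop] fun β : ℝ => β⁻¹
  w_high : ∀ j : Fin (Module.finrank ℂ H),
    (j : ℕ) < Module.finrank ℂ (LinearMap.range (B : H →ₗ[ℂ] H)) →
      (fun β : ℝ => w j β - w0 j) =O[atTop] fun β : ℝ => β⁻¹
  ζ_low : ∀ j : Fin (Module.finrank ℂ H),
    Module.finrank ℂ (LinearMap.range (B : H →ₗ[ℂ] H)) ≤ (j : ℕ) →
      (fun β : ℝ => ζ j β - (((inner ℂ (w0 j) (Ω (w0 j)) : ℂ).re : ℂ)
          - Complex.I * ((inner ℂ (wneg j) (B (wneg j)) : ℂ).re : ℂ) * (β : ℂ)⁻¹))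
        =O[atTop] fun β : ℝ => (β ^ 2)⁻¹
  w_low : ∀ j : Fin (Module.finrank ℂ H),
    Module.finrank ℂ (LinearMap.range (B : H →ₗ[ℂ] H)) ≤ (j : ℕ) →
      (fun β : ℝ => w j β - (w0 j + ((β : ℂ))⁻¹ • wneg j)) =O[atTop] fun β : ℝ => (β ^ 2)⁻¹

/-- `ρ_j = (ẘ_j, Ω ẘ_j)`. -/
def Thm1Family.ρ {Ω B : H →L[ℂ] H} (F : Thm1Family Ω B)
    (j : Fin (Module.finrank ℂ H)) : ℝ :=
  (inner ℂ (F.w0 j) (Ω (F.w0 j)) : ℂ).re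

/-- `d_j = (w_j^{(−1)}, B w_j^{(−1)})`. -/
def Thm1Family.d {Ω B : H →L[ℂ] H} (F : Thm1Family Ω B)
    (j : Fin (Module.finrank ℂ H)) : ℝ :=
  (inner ℂ (F.wneg j) (B (F.wneg j)) : ℂ).re


-- inner ℂ products with all members of a full orthonormal family vanish → zero
lemma aux_eq_zero (w0 : Fin (Module.finrank ℂ H) → H) (horth : Orthonormal ℂ w0)
    (x : H) (hx : ∀ j, (inner ℂ (w0 j) x : ℂ) = 0) : x = 0 := by
  have hspan : Submodule.span ℂ (Set.range w0) = ⊤ :=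
    horth.linearIndependent.span_eq_top_of_card_eq_finrank' (by simp)
  have hxmem : x ∈ (Submodule.span ℂ (Set.range w0))ᗮ := by
    rw [Submodule.mem_orthogonal]
    intro u hu
    induction hu using Submodule.span_induction with
    | mem u hu => obtain ⟨j, rfl⟩ := hu; exact hx j
    | zero => simp
    | add u v _ _ hu hv => rw [inner_add_left, hu, hv]; ring
    | smul c u _ hu => rw [inner_smul_left, hu]; ring
  rw [hspan, Submodule.top_orthogonal_eq_bot] at hxmem
  simpa using hxmem

-- ker ⊥ range for selfadjoint B
lemma aux_ker_range (B : H →L[ℂ] H) (hB : IsSelfAdjoint B) (x y : H)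
    (hx : B x = 0) (hy : y ∈ LinearMap.range (B : H →ₗ[ℂ] H)) : (inner ℂ y x : ℂ) = 0 := by
  obtain ⟨z, rfl⟩ := hy
  have := hB.isSymmetric z x
  simp only [ContinuousLinearMap.coe_coe] at this ⊢
  rw [this, hx, inner_zero_right]

lemma aux_mem_orth (B : H →L[ℂ] H) (hB : IsSelfAdjoint B) (x : H) (hx : B x = 0) :
    x ∈ (LinearMap.range (B : H →ₗ[ℂ] H))ᗮ := by
  rw [Submodule.mem_orthogonal]
  intro u hu
  exact aux_ker_range B hB x u hx hu

open Topology in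
set_option maxHeartbeats 1000000 in
lemma key_low (Ω B : H →L[ℂ] H) (F : Thm1Family Ω B)
    (j : Fin (Module.finrank ℂ H)) (hj : Module.finrank ℂ (LinearMap.range (B : H →ₗ[ℂ] H)) ≤ (j : ℕ)) :
    Ω (F.w0 j) - Complex.I • B (F.wneg j) = ((F.ρ j : ℝ) : ℂ) • F.w0 j := by
  have hr := F.w_low j hj
  have hζ := F.ζ_low j hj
  have hBw0 : B (F.w0 j) = 0 := F.eig0_low j hj
  have hinv2 : Tendsto (fun β : ℝ => (β ^ 2)⁻¹) atTop (𝓝 0) :=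
    (tendsto_pow_atTop two_ne_zero).inv_tendsto_atTop
  -- the remainder r β := w j β - (w0 + β⁻¹ wneg) tends to 0
  have h1 : Tendsto (fun β : ℝ => F.w j β - (F.w0 j + ((β : ℂ))⁻¹ • F.wneg j))
      atTop (𝓝 0) := hr.trans_tendsto hinv2
  -- (β:ℂ)⁻¹ → 0
  have hci : Tendsto (fun β : ℝ => ((β : ℂ))⁻¹) atTop (𝓝 0) := by
    have := (Complex.continuous_ofReal.tendsto 0).comp tendsto_inv_atTop_zero
    simpa [Function.comp_def, Complex.ofReal_inv] using this
  have h2 : Tendsto (fun β : ℝ => ((β : ℂ))⁻¹ • F.wneg j) atTop (𝓝 0) := by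
    simpa using hci.smul_const (F.wneg j)
  -- w j β → w0 j
  have hw : Tendsto (fun β : ℝ => F.w j β) atTop (𝓝 (F.w0 j)) := by
    have h3 := h1.add h2
    rw [add_zero] at h3
    have h4 : (fun β : ℝ => F.w j β - (F.w0 j + ((β : ℂ))⁻¹ • F.wneg j)
        + ((β : ℂ))⁻¹ • F.wneg j) = fun β : ℝ => F.w j β - F.w0 j := by
      funext β; abel
    rw [h4] at h3
    exact tendsto_sub_nhds_zero_iff.mp h3
  -- (β:ℂ) • r β → 0
  have hβr : Tendsto (fun β : ℝ => ((β : ℂ)) • (F.w j β - (F.w0 j + ((β : ℂ))⁻¹ • F.wneg j)))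
      atTop (𝓝 0) := by
    have hco : (fun β : ℝ => ((β : ℂ))) =O[atTop] fun β : ℝ => β :=
      isBigO_of_le atTop (fun β => by simp)
    have h5 := hco.smul hr
    have h6 : Tendsto (fun β : ℝ => β • ((β ^ 2)⁻¹ : ℝ)) atTop (𝓝 0) := by
      apply tendsto_inv_atTop_zero.congr'
      filter_upwards [eventually_ge_atTop (1:ℝ)] with β hβ
      have : β ≠ 0 := by linarith
      field_simp
      rw [smul_eq_mul]; field_simp
    exact h5.trans_tendsto h6
  -- (β:ℂ) • B (w j β) → B (wneg j)
  have hβB : Tendsto (fun β : ℝ => ((β : ℂ)) • B (F.w j β)) atTop (𝓝 (B (F.wneg j))) := by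
    have h7 : Tendsto (fun β : ℝ =>
        B (((β : ℂ)) • (F.w j β - (F.w0 j + ((β : ℂ))⁻¹ • F.wneg j)))) atTop (𝓝 0) := by
      have h7' := (B.continuous.tendsto 0).comp hβr
      rw [map_zero] at h7'
      exact h7'
    have h8 := h7.add (tendsto_const_nhds (x := B (F.wneg j)))
    rw [zero_add] at h8
    apply h8.congr'
    filter_upwards [eventually_ge_atTop (1:ℝ)] with β hβ
    have hβ0 : ((β : ℂ)) ≠ 0 := by
      simp only [ne_eq, Complex.ofReal_eq_zero]; linarith
    rw [map_smul, map_sub, map_add, hBw0, map_smul, smul_sub, smul_add, smul_smul,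
      mul_inv_cancel₀ hβ0, one_smul]
    simp
  -- ζ j β → ρ j
  have hζt : Tendsto (fun β : ℝ => F.ζ j β) atTop (𝓝 ((F.ρ j : ℝ) : ℂ)) := by
    have h9 : Tendsto (fun β : ℝ => F.ζ j β - (((inner ℂ (F.w0 j) (Ω (F.w0 j)) : ℂ).re : ℂ)
        - Complex.I * ((inner ℂ (F.wneg j) (B (F.wneg j)) : ℂ).re : ℂ) * ((β : ℂ))⁻¹))
        atTop (𝓝 0) := hζ.trans_tendsto hinv2
    have h10 : Tendsto (fun β : ℝ =>
        Complex.I * ((inner ℂ (F.wneg j) (B (F.wneg j)) : ℂ).re : ℂ) * ((β : ℂ))⁻¹)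
        atTop (𝓝 0) := by
      simpa using (hci.const_mul
        (Complex.I * ((inner ℂ (F.wneg j) (B (F.wneg j)) : ℂ).re : ℂ)))
    have h11 := (h9.sub h10).add
      (tendsto_const_nhds (x := ((inner ℂ (F.w0 j) (Ω (F.w0 j)) : ℂ).re : ℂ)))
    rw [zero_sub, neg_zero, zero_add] at h11
    · apply h11.congr
      intro β
      ring
  -- the eigen-equation function, eventually zero
  have hfz : Tendsto (fun β : ℝ => sysOp Ω B β (F.w j β) - F.ζ j β • F.w j β) atTop (𝓝 0) := by
    apply tendsto_const_nhds.congr'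
    filter_upwards [eventually_gt_atTop F.β₀] with β hβ
    rw [F.eig β hβ j, sub_self]
  -- its limit from the expansions
  have hfl : Tendsto (fun β : ℝ => sysOp Ω B β (F.w j β) - F.ζ j β • F.w j β) atTop
      (𝓝 (Ω (F.w0 j) - Complex.I • B (F.wneg j) - ((F.ρ j : ℝ) : ℂ) • F.w0 j)) := by
    have hΩw : Tendsto (fun β : ℝ => Ω (F.w j β)) atTop (𝓝 (Ω (F.w0 j))) :=
      (Ω.continuous.tendsto _).comp hw
    have hIB : Tendsto (fun β : ℝ => Complex.I • (((β : ℂ)) • B (F.w j β))) atTop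
        (𝓝 (Complex.I • B (F.wneg j))) := hβB.const_smul Complex.I
    have hζw : Tendsto (fun β : ℝ => F.ζ j β • F.w j β) atTop
        (𝓝 (((F.ρ j : ℝ) : ℂ) • F.w0 j)) := hζt.smul hw
    have := (hΩw.sub hIB).sub hζw
    apply this.congr
    intro β
    simp only [sysOp, ContinuousLinearMap.sub_apply, ContinuousLinearMap.smul_apply,
      mul_smul]
  have := tendsto_nhds_unique hfl hfz
  rwa [sub_eq_zero] at this

section main
variable (Ω B : H →L[ℂ] H)

lemma w0_ne_zero (F : Thm1Family Ω B) (j : Fin (Module.finrank ℂ H)) : F.w0 j ≠ 0 := by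
  intro h
  have := F.orth.1 j
  rw [h] at this
  simp at this

lemma w0_mem_range (hB : IsSelfAdjoint B) (F : Thm1Family Ω B) (j : Fin (Module.finrank ℂ H))
    (hj : (j : ℕ) < Module.finrank ℂ (LinearMap.range (B : H →ₗ[ℂ] H))) : F.w0 j ∈ LinearMap.range (B : H →ₗ[ℂ] H) := by
  refine ⟨((F.ζ0 j : ℂ))⁻¹ • F.w0 j, ?_⟩
  have hz : (F.ζ0 j : ℂ) ≠ 0 := Complex.ofReal_ne_zero.mpr (F.ζ0_pos j hj).ne'
  show B (((F.ζ0 j : ℂ))⁻¹ • F.w0 j) = F.w0 j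
  rw [map_smul, F.eig0_high j hj, smul_smul, inv_mul_cancel₀ hz, one_smul]

lemma proj_w0 (hB : IsSelfAdjoint B) (F : Thm1Family Ω B) (j : Fin (Module.finrank ℂ H))
    (hj : Module.finrank ℂ (LinearMap.range (B : H →ₗ[ℂ] H)) ≤ (j : ℕ)) :
    ((LinearMap.range (B : H →ₗ[ℂ] H)).orthogonalProjectionOnto (Ω (F.w0 j)) : H)
      = Complex.I • B (F.wneg j) := by
  have hk := key_low Ω B F j hj
  have hΩw0 : Ω (F.w0 j) = ((F.ρ j : ℝ) : ℂ) • F.w0 j + Complex.I • B (F.wneg j) := by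
    rw [← hk]; abel
  have hmem : F.w0 j ∈ (LinearMap.range (B : H →ₗ[ℂ] H))ᗮ := by
    rw [Submodule.mem_orthogonal]
    intro u hu
    exact aux_ker_range B hB _ u (F.eig0_low j hj) hu
  have h0 : (LinearMap.range (B : H →ₗ[ℂ] H)).orthogonalProjectionOnto (F.w0 j) = 0 :=
    Submodule.orthogonalProjectionOnto_apply_of_mem_orthogonal hmem
  have h1 : ((LinearMap.range (B : H →ₗ[ℂ] H)).orthogonalProjectionOnto (B (F.wneg j)) : H) = B (F.wneg j) :=
    Submodule.starProjection_eq_self_iff.mpr ⟨F.wneg j, rfl⟩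
  rw [hΩw0, map_add, map_smul, map_smul, h0]
  push_cast
  rw [h1]
  simp

lemma omega1_eig (hB : IsSelfAdjoint B) (F : Thm1Family Ω B) (j : Fin (Module.finrank ℂ H))
    (hj : Module.finrank ℂ (LinearMap.range (B : H →ₗ[ℂ] H)) ≤ (j : ℕ)) :
    Ω (F.w0 j) - ((LinearMap.range (B : H →ₗ[ℂ] H)).orthogonalProjectionOnto (Ω (F.w0 j)) : H)
      = ((F.ρ j : ℝ) : ℂ) • F.w0 j := by
  rw [proj_w0 Ω B hB F j hj]
  exact key_low Ω B F j hj

end main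
/-- **Corollary 2: computing the expansion coefficients under a
simple spectrum.**
(1) If every eigenspace of `B₂` (the compression of `B` to `H_B = ran B`) is
one-dimensional — i.e. `B₂` has `N_B` distinct eigenvalues — then for every
Theorem-1 family: every eigenvalue of `B₂` occurs among the high-loss
coefficients `ζ̊_j`, and for each high-loss `j` and every unit eigenvector
`u ∈ H_B` with `B u = ζ̊_j u` one has `ρ_j = (u, Ω u)`.
(2) If every eigenspace of `Ω₁` (the compression of `Ω` to `ker B`, i.e.
`x ↦ Ω x − P_B Ω x`) is one-dimensional, then for every Theorem-1 family:
every eigenvalue of `Ω₁` occurs among the low-loss coefficients `ρ_j`, and for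
each low-loss `j` and every unit eigenvector `u ∈ ker B` of `Ω₁` with
eigenvalue `ρ_j` one has `d_j = (u, Θ* B₂⁻¹ Θ u)`, the latter expressed via the
unique `y ∈ ran B` with `B y = P_B Ω u` as `d_j = (P_B Ω u, y)`. -/
theorem statement6
    (Ω B : H →L[ℂ] H) (hΩ : IsSelfAdjoint Ω) (hB : IsSelfAdjoint B)
    (hBpos : ∀ x : H, 0 ≤ (inner ℂ x (B x) : ℂ).re)
    (hNB_pos : 0 < Module.finrank ℂ (LinearMap.range (B : H →ₗ[ℂ] H)))
    (hNB_lt : Module.finrank ℂ (LinearMap.range (B : H →ₗ[ℂ] H)) < Module.finrank ℂ H) :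
    ((∀ x y : H, x ∈ LinearMap.range (B : H →ₗ[ℂ] H) → y ∈ LinearMap.range (B : H →ₗ[ℂ] H) → x ≠ 0 →
        ∀ μ : ℝ, B x = (μ : ℂ) • x → B y = (μ : ℂ) • y → ∃ c : ℂ, y = c • x) →
      ∀ F : Thm1Family Ω B,
        (∀ μ : ℝ, (∃ x : H, x ∈ LinearMap.range (B : H →ₗ[ℂ] H) ∧ x ≠ 0 ∧ B x = (μ : ℂ) • x) →
          ∃ j : Fin (Module.finrank ℂ H),
            (j : ℕ) < Module.finrank ℂ (LinearMap.range (B : H →ₗ[ℂ] H)) ∧ F.ζ0 j = μ) ∧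
        (∀ j : Fin (Module.finrank ℂ H),
          (j : ℕ) < Module.finrank ℂ (LinearMap.range (B : H →ₗ[ℂ] H)) →
          ∀ u : H, u ∈ LinearMap.range (B : H →ₗ[ℂ] H) → ‖u‖ = 1 → B u = (F.ζ0 j : ℂ) • u →
            F.ρ j = (inner ℂ u (Ω u) : ℂ).re)) ∧
    ((∀ x y : H, B x = 0 → B y = 0 → x ≠ 0 →
        ∀ μ : ℝ,
          Ω x - ((LinearMap.range (B : H →ₗ[ℂ] H)).orthogonalProjectionOnto (Ω x) : H) = (μ : ℂ) • x →
          Ω y - ((LinearMap.range (B : H →ₗ[ℂ] H)).orthogonalProjectionOnto (Ω y) : H) = (μ : ℂ) • y →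
          ∃ c : ℂ, y = c • x) →
      ∀ F : Thm1Family Ω B,
        (∀ μ : ℝ,
          (∃ x : H, B x = 0 ∧ x ≠ 0 ∧
            Ω x - ((LinearMap.range (B : H →ₗ[ℂ] H)).orthogonalProjectionOnto (Ω x) : H) = (μ : ℂ) • x) →
          ∃ j : Fin (Module.finrank ℂ H),
            Module.finrank ℂ (LinearMap.range (B : H →ₗ[ℂ] H)) ≤ (j : ℕ) ∧ F.ρ j = μ) ∧
        (∀ j : Fin (Module.finrank ℂ H),
          Module.finrank ℂ (LinearMap.range (B : H →ₗ[ℂ] H)) ≤ (j : ℕ) →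
          ∀ u : H, B u = 0 → ‖u‖ = 1 →
            Ω u - ((LinearMap.range (B : H →ₗ[ℂ] H)).orthogonalProjectionOnto (Ω u) : H) = (F.ρ j : ℂ) • u →
            ∀ y : H, y ∈ LinearMap.range (B : H →ₗ[ℂ] H) →
              B y = ((LinearMap.range (B : H →ₗ[ℂ] H)).orthogonalProjectionOnto (Ω u) : H) →
              (F.d j : ℂ)
                = inner ℂ (((LinearMap.range (B : H →ₗ[ℂ] H)).orthogonalProjectionOnto (Ω u) : H)) y)) := by
  constructor
  · -- Part (1)
    intro hsimp F
    constructor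
    · -- every eigenvalue of B₂ occurs among the ζ0 j
      rintro μ ⟨x, hxr, hxne, hxe⟩
      by_contra hcon
      push_neg at hcon
      refine hxne (aux_eq_zero F.w0 F.orth x fun j => ?_)
      by_cases hj : (j : ℕ) < Module.finrank ℂ (LinearMap.range (B : H →ₗ[ℂ] H))
      · have lhs : (inner ℂ (B (F.w0 j)) x : ℂ) = (F.ζ0 j : ℂ) * inner ℂ (F.w0 j) x := by
          rw [F.eig0_high j hj, inner_smul_left, Complex.conj_ofReal]
        have rhs : (inner ℂ (F.w0 j) (B x) : ℂ) = (μ : ℂ) * inner ℂ (F.w0 j) x := by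
          rw [hxe, inner_smul_right]
        have hsym := hB.isSymmetric (F.w0 j) x
        simp only [ContinuousLinearMap.coe_coe] at hsym
        have h1 : ((F.ζ0 j : ℂ) - μ) * inner ℂ (F.w0 j) x = 0 := by
          rw [sub_mul, ← lhs, hsym, rhs, sub_self]
        have hne : (F.ζ0 j : ℂ) - (μ : ℂ) ≠ 0 := by
          rw [sub_ne_zero]
          exact_mod_cast hcon j hj
        exact (mul_eq_zero.mp h1).resolve_left hne
      · push_neg at hj
        exact inner_eq_zero_symm.mp
          (aux_ker_range B hB (F.w0 j) x (F.eig0_low j hj) hxr)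
    · -- ρ j = (u, Ω u) for unit eigenvectors u
      intro j hj u hur hu1 hue
      obtain ⟨c, hc⟩ := hsimp (F.w0 j) u (w0_mem_range Ω B hB F j hj) hur
        (w0_ne_zero Ω B F j) (F.ζ0 j) (F.eig0_high j hj) hue
      have hcc : (starRingEnd ℂ) c * c = 1 := by
        have hcn : ‖c‖ = 1 := by
          have h := hu1
          rw [hc, norm_smul, F.orth.1 j, mul_one] at h
          exact h
        rw [mul_comm, Complex.mul_conj]
        norm_cast
        simp [Complex.normSq_mul, Complex.normSq_I, Complex.normSq_eq_norm_sq, hcn]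
      show F.ρ j = _
      rw [hc, map_smul, inner_smul_left, inner_smul_right, ← mul_assoc, hcc, one_mul]
      rfl
  · -- Part (2)
    intro hsimp F
    constructor
    · -- every eigenvalue of Ω₁ occurs among the ρ j
      rintro μ ⟨x, hxk, hxne, hxe⟩
      by_contra hcon
      push_neg at hcon
      refine hxne (aux_eq_zero F.w0 F.orth x fun j => ?_)
      by_cases hj : Module.finrank ℂ (LinearMap.range (B : H →ₗ[ℂ] H)) ≤ (j : ℕ)
      · -- low-loss indices: Ω₁-eigenvalue separation
        have he := omega1_eig Ω B hB F j hj
        have hP1 : (inner ℂ (((LinearMap.range (B : H →ₗ[ℂ] H)).orthogonalProjectionOnto (Ω (F.w0 j)) : H)) x : ℂ)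
            = 0 :=
          aux_ker_range B hB x _ hxk (Submodule.coe_mem _)
        have hP2 : (inner ℂ (F.w0 j)
            (((LinearMap.range (B : H →ₗ[ℂ] H)).orthogonalProjectionOnto (Ω x) : H)) : ℂ) = 0 := by
          rw [inner_eq_zero_symm]
          exact aux_ker_range B hB (F.w0 j) _ (F.eig0_low j hj) (Submodule.coe_mem _)
        have hsym := hΩ.isSymmetric (F.w0 j) x
        simp only [ContinuousLinearMap.coe_coe] at hsym
        have lhs : (inner ℂ (Ω (F.w0 j)
            - ((LinearMap.range (B : H →ₗ[ℂ] H)).orthogonalProjectionOnto (Ω (F.w0 j)) : H)) x : ℂ)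
            = (F.ρ j : ℂ) * inner ℂ (F.w0 j) x := by
          rw [he, inner_smul_left, Complex.conj_ofReal]
        have rhs : (inner ℂ (F.w0 j) (Ω x
            - ((LinearMap.range (B : H →ₗ[ℂ] H)).orthogonalProjectionOnto (Ω x) : H)) : ℂ)
            = (μ : ℂ) * inner ℂ (F.w0 j) x := by
          rw [hxe, inner_smul_right]
        rw [inner_sub_left, hP1, sub_zero] at lhs
        rw [inner_sub_right, hP2, sub_zero] at rhs
        have h1 : ((F.ρ j : ℂ) - μ) * inner ℂ (F.w0 j) x = 0 := by
          rw [sub_mul, ← lhs, hsym, rhs, sub_self]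
        have hne : (F.ρ j : ℂ) - (μ : ℂ) ≠ 0 := by
          rw [sub_ne_zero]
          exact_mod_cast hcon j hj
        exact (mul_eq_zero.mp h1).resolve_left hne
      · -- high-loss indices: w0 j ∈ ran B ⊥ x ∈ ker B
        push_neg at hj
        exact aux_ker_range B hB x (F.w0 j) hxk (w0_mem_range Ω B hB F j hj)
    · -- d j = (P_B Ω u, y)
      intro j hj u hBu hu1 hue y hyr hyB
      obtain ⟨c, hc⟩ := hsimp (F.w0 j) u (F.eig0_low j hj) hBu
        (w0_ne_zero Ω B F j) (F.ρ j) (omega1_eig Ω B hB F j hj) hue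
      have hcc : (starRingEnd ℂ) (c * Complex.I) * (c * Complex.I) = 1 := by
        have hcn : ‖c‖ = 1 := by
          have h := hu1
          rw [hc, norm_smul, F.orth.1 j, mul_one] at h
          exact h
        rw [mul_comm, Complex.mul_conj]
        norm_cast
        simp [Complex.normSq_mul, Complex.normSq_I, Complex.normSq_eq_norm_sq, hcn]
      have hPq : ((LinearMap.range (B : H →ₗ[ℂ] H)).orthogonalProjectionOnto (Ω u) : H)
          = B ((c * Complex.I) • F.wneg j) := by
        rw [hc, map_smul, map_smul, Submodule.coe_smul, proj_w0 Ω B hB F j hj,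
          map_smul, smul_smul]
      have hreal : (inner ℂ (F.wneg j) (B (F.wneg j)) : ℂ) = ((F.d j : ℝ) : ℂ) := by
        have hsym := hB.isSymmetric (F.wneg j) (F.wneg j)
        simp only [ContinuousLinearMap.coe_coe] at hsym
        have hconj : (starRingEnd ℂ) (inner ℂ (F.wneg j) (B (F.wneg j)) : ℂ)
            = inner ℂ (F.wneg j) (B (F.wneg j)) := by
          rw [inner_conj_symm, hsym]
        exact (Complex.conj_eq_iff_re.mp hconj) ▸ rfl
      have hsymB := hB.isSymmetric ((c * Complex.I) • F.wneg j) y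
      simp only [ContinuousLinearMap.coe_coe] at hsymB
      calc ((F.d j : ℝ) : ℂ)
          = inner ℂ (F.wneg j) (B (F.wneg j)) := hreal.symm
        _ = (starRingEnd ℂ) (c * Complex.I) * (c * Complex.I)
            * inner ℂ (F.wneg j) (B (F.wneg j)) := by rw [hcc, one_mul]
        _ = inner ℂ ((c * Complex.I) • F.wneg j) (B ((c * Complex.I) • F.wneg j)) := by
            rw [map_smul, inner_smul_left, inner_smul_right, mul_assoc]
        _ = inner ℂ ((c * Complex.I) • F.wneg j) (B y) := by
            rw [hyB, hPq]
        _ = inner ℂ (B ((c * Complex.I) • F.wneg j)) y := hsymB.symm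
        _ = inner ℂ (((LinearMap.range (B : H →ₗ[ℂ] H)).orthogonalProjectionOnto (Ω u) : H)) y := by rw [← hPq]
end
end

section
/- Energy and dissipation of the eigenmodes (Proposition 4). For every Theorem-1 family, as β → ∞: U[w_j(β)] = 1/2 + O(β⁻¹) for every 1 ≤ j ≤ N; W_dis[w_j(β)] = ζ̊_j β + O(1) for the high-loss indices 1 ≤ j ≤ N_B; and W_dis[w_j(β)] = d_j β⁻¹ + O(β⁻²) for the low-loss indices N_B+1 ≤ j ≤ N. In particular, W_dis[w_j(β)] → ∞ as β → ∞ for 1 ≤ j ≤ N_B and W_dis[w_j(β)] → 0 as β → ∞ for N_B+1 ≤ j ≤ N. -/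
open Filter Asymptotics

noncomputable section

variable {H : Type*} [NormedAddCommGroup H] [InnerProductSpace ℂ H] [FiniteDimensional ℂ H]

/-- The energy `U[w] = ½ (w, w)` of a mode `w`. -/
def energy (x : H) : ℝ := (1 / 2) * ‖x‖ ^ 2

/-- The power of energy dissipation `W_dis[w] = β (w, B w)` of a mode `w`. -/
def dissip (B : H →L[ℂ] H) (β : ℝ) (x : H) : ℝ := β * (inner ℂ x (B x) : ℂ).re

set_option linter.unusedSectionVars false

lemma aux_innerO {f g : ℝ → H} {u v : ℝ → ℝ} (hf : f =O[atTop] u) (hg : g =O[atTop] v) :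
    (fun β => (inner ℂ (f β) (g β) : ℂ)) =O[atTop] (fun β => u β * v β) := by
  refine (isBigO_of_le atTop fun β => ?_).trans (hf.norm_left.mul hg.norm_left)
  calc ‖(inner ℂ (f β) (g β) : ℂ)‖ ≤ ‖f β‖ * ‖g β‖ := norm_inner_le_norm _ _
    _ ≤ ‖‖f β‖ * ‖g β‖‖ := le_abs_self _

lemma aux_reO {f : ℝ → ℂ} {u : ℝ → ℝ} (h : f =O[atTop] u) :
    (fun β => (f β).re) =O[atTop] u := by
  refine (isBigO_of_le atTop fun β => ?_).trans h
  simpa using Complex.abs_re_le_norm (f β)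

lemma aux_coeO : (fun β : ℝ => ((β : ℂ))⁻¹) =O[atTop] (fun β : ℝ => β⁻¹) := by
  apply isBigO_of_le atTop fun β => ?_
  simp [norm_inv]

lemma aux_inv_O_one : (fun β : ℝ => β⁻¹) =O[atTop] (fun _ : ℝ => (1 : ℝ)) :=
  (tendsto_inv_atTop_zero).isBigO_one ℝ

lemma aux_sq_inv_O_inv : (fun β : ℝ => (β ^ 2)⁻¹) =O[atTop] (fun β : ℝ => β⁻¹) := by
  have h : (fun β : ℝ => (β ^ 2)⁻¹) = fun β : ℝ => β⁻¹ * β⁻¹ := by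
    funext β; rw [sq, mul_inv]
  rw [h]
  simpa using (aux_inv_O_one.mul (isBigO_refl (fun β : ℝ => β⁻¹) atTop))

lemma aux_energy {w : ℝ → H} {w0 : H} (hw0 : ‖w0‖ = 1)
    (hr : (fun β => w β - w0) =O[atTop] fun β : ℝ => β⁻¹) :
    (fun β => energy (w β) - 1 / 2) =O[atTop] fun β : ℝ => β⁻¹ := by
  have h1 : (fun β => ‖w β‖ - 1) =O[atTop] fun β : ℝ => β⁻¹ := by
    refine (isBigO_of_le atTop fun β => ?_).trans hr
    calc ‖‖w β‖ - 1‖ = |‖w β‖ - ‖w0‖| := by rw [hw0, Real.norm_eq_abs]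
      _ ≤ ‖w β - w0‖ := abs_norm_sub_norm_le _ _
  have h2 : (fun β => ‖w β‖ + 1) =O[atTop] (fun _ : ℝ => (1 : ℝ)) := by
    have hwO : w =O[atTop] (fun _ : ℝ => (1 : ℝ)) := by
      have he : w = fun β => (w β - w0) + w0 := by funext β; abel
      rw [he]
      exact (hr.trans aux_inv_O_one).add (isBigO_const_const _ one_ne_zero _)
    exact hwO.norm_left.add (isBigO_refl _ _)
  have he : (fun β => energy (w β) - 1 / 2)
      = fun β => (1 / 2) * ((‖w β‖ - 1) * (‖w β‖ + 1)) := by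
    funext β; simp only [energy]; ring
  rw [he]
  simpa using ((h1.mul h2).const_mul_left (1 / 2))

lemma aux_dissip_high (B : H →L[ℂ] H) {w : ℝ → H} {w0 : H} {ζ0 : ℝ}
    (hBw0 : B w0 = (ζ0 : ℂ) • w0) (hn : ‖w0‖ = 1)
    (hr : (fun β => w β - w0) =O[atTop] fun β : ℝ => β⁻¹) :
    (fun β => dissip B β (w β) - ζ0 * β) =O[atTop] fun _ : ℝ => (1 : ℝ) := by
  set r : ℝ → H := fun β => w β - w0 with hrdef
  have hBr : (fun β => B (r β)) =O[atTop] fun β : ℝ => β⁻¹ :=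
    (B.isBigO_comp _ _).trans hr
  set E : ℝ → ℂ := fun β =>
    inner ℂ w0 (B (r β)) + inner ℂ (r β) ((ζ0 : ℂ) • w0) + inner ℂ (r β) (B (r β)) with hEdef
  have hid : ∀ β, (inner ℂ (w β) (B (w β)) : ℂ) = (ζ0 : ℂ) + E β := by
    intro β
    have hw : w β = w0 + r β := by simp [hrdef]
    rw [hw, map_add, inner_add_left, inner_add_right, inner_add_right, hBw0,
      inner_smul_right, inner_self_eq_norm_sq_to_K, hn, hEdef]
    push_cast
    ring
  have t1 : (fun β => (inner ℂ w0 (B (r β)) : ℂ)) =O[atTop] fun β : ℝ => β⁻¹ := by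
    simpa using aux_innerO (isBigO_const_const w0 one_ne_zero atTop) hBr
  have t2 : (fun β => (inner ℂ (r β) ((ζ0 : ℂ) • w0) : ℂ)) =O[atTop] fun β : ℝ => β⁻¹ := by
    simpa using aux_innerO hr (isBigO_const_const ((ζ0 : ℂ) • w0) one_ne_zero atTop)
  have t3 : (fun β => (inner ℂ (r β) (B (r β)) : ℂ)) =O[atTop] fun β : ℝ => β⁻¹ := by
    have := aux_innerO hr hBr
    refine this.trans ?_
    simpa using ((isBigO_refl (fun β : ℝ => β⁻¹) atTop).mul aux_inv_O_one)
  have hE : E =O[atTop] fun β : ℝ => β⁻¹ := (t1.add t2).add t3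
  have hgoal : (fun β => dissip B β (w β) - ζ0 * β) = fun β => β * (E β).re := by
    funext β
    simp only [dissip, hid β, Complex.add_re, Complex.ofReal_re]
    ring
  rw [hgoal]
  have hmul : (fun β => β * (E β).re) =O[atTop] fun β : ℝ => β * β⁻¹ :=
    (isBigO_refl (fun β : ℝ => β) atTop).mul (aux_reO hE)
  refine hmul.trans (EventuallyEq.isBigO ?_)
  filter_upwards [eventually_gt_atTop (0 : ℝ)] with β hβ
  field_simp

lemma aux_smul_O (x : H) : (fun β : ℝ => ((β : ℂ))⁻¹ • x) =O[atTop] fun β : ℝ => β⁻¹ := by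
  rw [isBigO_iff]
  refine ⟨‖x‖, Filter.Eventually.of_forall fun β => ?_⟩
  rw [norm_smul]
  simp [norm_inv, Real.norm_eq_abs, abs_inv, mul_comm]

lemma aux_dissip_low (B : H →L[ℂ] H) {w : ℝ → H} {w0 wneg : H} {d : ℝ}
    (hsym : ∀ x y : H, (inner ℂ (B x) y : ℂ) = inner ℂ x (B y))
    (hBw0 : B w0 = 0)
    (hd : (inner ℂ wneg (B wneg) : ℂ) = (d : ℂ))
    (hr : (fun β : ℝ => w β - (w0 + ((β : ℂ))⁻¹ • wneg)) =O[atTop] fun β : ℝ => (β ^ 2)⁻¹) :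
    (fun β => dissip B β (w β) - d * β⁻¹) =O[atTop] fun β : ℝ => (β ^ 2)⁻¹ := by
  set r : ℝ → H := fun β : ℝ => w β - (w0 + ((β : ℂ))⁻¹ • wneg) with hrdef
  have hBr : (fun β => B (r β)) =O[atTop] fun β : ℝ => (β ^ 2)⁻¹ :=
    (B.isBigO_comp _ _).trans hr
  set E : ℝ → ℂ := fun β : ℝ =>
    ((β : ℂ))⁻¹ * inner ℂ (B wneg) (r β) + inner ℂ (r β) (B (w β)) with hEdef
  have hid : ∀ β : ℝ, (inner ℂ (w β) (B (w β)) : ℂ) = ((β : ℂ))⁻¹ ^ 2 * (d : ℂ) + E β := by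
    intro β
    have hconj : (starRingEnd ℂ) ((β : ℂ))⁻¹ = ((β : ℂ))⁻¹ := by
      rw [map_inv₀, Complex.conj_ofReal]
    have hw : w β = (w0 + ((β : ℂ))⁻¹ • wneg) + r β := by simp [hrdef]
    have hBw : B (w β) = ((β : ℂ))⁻¹ • B wneg + B (r β) := by
      rw [hw]; simp [map_add, map_smul, hBw0]
    have h1 : (inner ℂ w0 (B (r β)) : ℂ) = 0 := by rw [← hsym, hBw0, inner_zero_left]
    have h2 : (inner ℂ w0 (B wneg) : ℂ) = 0 := by rw [← hsym, hBw0, inner_zero_left]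
    have h3 : (inner ℂ wneg (B (r β)) : ℂ) = inner ℂ (B wneg) (r β) := (hsym _ _).symm
    rw [hEdef, hBw]
    conv_lhs => rw [hw]
    simp only [inner_add_left, inner_add_right, inner_smul_left, inner_smul_right,
      hconj, h1, h2, h3, hd, hBw]
    ring
  have hBwO : (fun β => B (w β)) =O[atTop] fun β : ℝ => β⁻¹ := by
    have he : (fun β : ℝ => B (w β)) = fun β : ℝ => ((β : ℂ))⁻¹ • B wneg + B (r β) := by
      funext β
      have hw : w β = (w0 + ((β : ℂ))⁻¹ • wneg) + r β := by simp [hrdef]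
      rw [hw]; simp [map_add, map_smul, hBw0]
    rw [he]
    exact (aux_smul_O (B wneg)).add (hBr.trans aux_sq_inv_O_inv)
  have t1 : (fun β : ℝ => ((β : ℂ))⁻¹ * inner ℂ (B wneg) (r β)) =O[atTop]
      fun β : ℝ => β⁻¹ * (β ^ 2)⁻¹ := by
    have h2 : (fun β : ℝ => (inner ℂ (B wneg) (r β) : ℂ)) =O[atTop] fun β : ℝ => (β ^ 2)⁻¹ := by
      simpa using aux_innerO (isBigO_const_const (B wneg) one_ne_zero atTop) hr
    exact aux_coeO.mul h2
  have t2 : (fun β : ℝ => (inner ℂ (r β) (B (w β)) : ℂ)) =O[atTop]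
      fun β : ℝ => β⁻¹ * (β ^ 2)⁻¹ := by
    refine (aux_innerO hr hBwO).trans (EventuallyEq.isBigO ?_)
    filter_upwards with β
    ring
  have hE : E =O[atTop] fun β : ℝ => β⁻¹ * (β ^ 2)⁻¹ := t1.add t2
  have hgoal : (fun β : ℝ => dissip B β (w β) - d * β⁻¹) =ᶠ[atTop]
      fun β : ℝ => β * (E β).re := by
    filter_upwards [eventually_gt_atTop (0 : ℝ)] with β hβ
    have hc : (((β : ℂ))⁻¹ ^ 2 * (d : ℂ)) = (((β⁻¹ ^ 2 * d : ℝ)) : ℂ) := by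
      push_cast; ring
    simp only [dissip, hid β, hc, Complex.add_re, Complex.ofReal_re]
    field_simp
    ring
  refine hgoal.trans_isBigO ?_
  have hmul : (fun β : ℝ => β * (E β).re) =O[atTop] fun β : ℝ => β * (β⁻¹ * (β ^ 2)⁻¹) :=
    (isBigO_refl (fun β : ℝ => β) atTop).mul (aux_reO hE)
  refine hmul.trans (EventuallyEq.isBigO ?_)
  filter_upwards [eventually_gt_atTop (0 : ℝ)] with β hβ
  field_simp

/-- **Proposition 4: energy and dissipation of eigenmodes.**
For every Theorem-1 family, as `β → ∞`:
`U[w_j(β)] = 1/2 + O(β⁻¹)` for every `j`;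
`W_dis[w_j(β)] = ζ̊_j β + O(1)` for the high-loss indices, and
`W_dis[w_j(β)] = d_j β⁻¹ + O(β⁻²)` for the low-loss indices.
In particular `W_dis[w_j(β)] → ∞` for high-loss modes and `→ 0` for low-loss
modes as `β → ∞`. -/
theorem statement7
    (Ω B : H →L[ℂ] H) (hΩ : IsSelfAdjoint Ω) (hB : IsSelfAdjoint B)
    (hBpos : ∀ x : H, 0 ≤ (inner ℂ x (B x) : ℂ).re)
    (hNB_pos : 0 < Module.finrank ℂ (LinearMap.range (B : H →ₗ[ℂ] H)))
    (hNB_lt : Module.finrank ℂ (LinearMap.range (B : H →ₗ[ℂ] H)) < Module.finrank ℂ H)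
    (F : Thm1Family Ω B) :
    (∀ j : Fin (Module.finrank ℂ H),
      (fun β : ℝ => energy (F.w j β) - 1 / 2) =O[atTop] fun β : ℝ => β⁻¹) ∧
    (∀ j : Fin (Module.finrank ℂ H),
      (j : ℕ) < Module.finrank ℂ (LinearMap.range (B : H →ₗ[ℂ] H)) →
        (fun β : ℝ => dissip B β (F.w j β) - F.ζ0 j * β) =O[atTop] fun _ : ℝ => (1 : ℝ)) ∧
    (∀ j : Fin (Module.finrank ℂ H),
      Module.finrank ℂ (LinearMap.range (B : H →ₗ[ℂ] H)) ≤ (j : ℕ) →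
        (fun β : ℝ => dissip B β (F.w j β) - F.d j * β⁻¹) =O[atTop] fun β : ℝ => (β ^ 2)⁻¹) ∧
    (∀ j : Fin (Module.finrank ℂ H),
      (j : ℕ) < Module.finrank ℂ (LinearMap.range (B : H →ₗ[ℂ] H)) →
        Tendsto (fun β : ℝ => dissip B β (F.w j β)) atTop atTop) ∧
    (∀ j : Fin (Module.finrank ℂ H),
      Module.finrank ℂ (LinearMap.range (B : H →ₗ[ℂ] H)) ≤ (j : ℕ) →
        Tendsto (fun β : ℝ => dissip B β (F.w j β)) atTop (nhds 0)) := by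
  have hsym : ∀ x y : H, (inner ℂ (B x) y : ℂ) = inner ℂ x (B y) := by
    intro x y
    conv_lhs => rw [← ContinuousLinearMap.isSelfAdjoint_iff'.mp hB]
    exact ContinuousLinearMap.adjoint_inner_left B y x
  have hrlow : ∀ j : Fin (Module.finrank ℂ H), Module.finrank ℂ (LinearMap.range (B : H →ₗ[ℂ] H)) ≤ (j : ℕ) →
      (fun β : ℝ => F.w j β - F.w0 j) =O[atTop] fun β : ℝ => β⁻¹ := by
    intro j hj
    have h1 := F.w_low j hj
    have he : (fun β : ℝ => F.w j β - F.w0 j)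
        = fun β : ℝ => (F.w j β - (F.w0 j + ((β : ℂ))⁻¹ • F.wneg j)) + ((β : ℂ))⁻¹ • F.wneg j := by
      funext β; abel
    rw [he]
    exact (h1.trans aux_sq_inv_O_inv).add (aux_smul_O _)
  have key_high : ∀ j : Fin (Module.finrank ℂ H), (j : ℕ) < Module.finrank ℂ (LinearMap.range (B : H →ₗ[ℂ] H)) →
      (fun β : ℝ => dissip B β (F.w j β) - F.ζ0 j * β) =O[atTop] fun _ : ℝ => (1 : ℝ) :=
    fun j hj => aux_dissip_high B (F.eig0_high j hj) (F.orth.1 j) (F.w_high j hj)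
  have key_low : ∀ j : Fin (Module.finrank ℂ H), Module.finrank ℂ (LinearMap.range (B : H →ₗ[ℂ] H)) ≤ (j : ℕ) →
      (fun β : ℝ => dissip B β (F.w j β) - F.d j * β⁻¹) =O[atTop] fun β : ℝ => (β ^ 2)⁻¹ := by
    intro j hj
    have hd : (inner ℂ (F.wneg j) (B (F.wneg j)) : ℂ) = ((F.d j : ℝ) : ℂ) := by
      have hc : (starRingEnd ℂ) (inner ℂ (F.wneg j) (B (F.wneg j)) : ℂ)
          = inner ℂ (F.wneg j) (B (F.wneg j)) := by
        rw [inner_conj_symm]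
        exact hsym _ _
      exact (Complex.conj_eq_iff_re.mp hc).symm
    exact aux_dissip_low B hsym (F.eig0_low j hj) hd (F.w_low j hj)
  refine ⟨?_, key_high, key_low, ?_, ?_⟩
  · intro j
    rcases lt_or_ge ((j : ℕ)) (Module.finrank ℂ (LinearMap.range (B : H →ₗ[ℂ] H))) with hj | hj
    · exact aux_energy (F.orth.1 j) (F.w_high j hj)
    · exact aux_energy (F.orth.1 j) (hrlow j hj)
  · intro j hj
    obtain ⟨C, hC⟩ := (key_high j hj).bound
    have h1 : Tendsto (fun β : ℝ => F.ζ0 j * β + -C) atTop atTop := by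
      apply tendsto_atTop_add_const_right
      exact Tendsto.const_mul_atTop (F.ζ0_pos j hj) tendsto_id
    refine tendsto_atTop_mono' atTop ?_ h1
    filter_upwards [hC] with β hβ
    have h2 : |dissip B β (F.w j β) - F.ζ0 j * β| ≤ C := by
      simpa [Real.norm_eq_abs] using hβ
    have h3 := (abs_le.mp h2).1
    linarith
  · intro j hj
    have h0 : Tendsto (fun β : ℝ => (β ^ 2)⁻¹) atTop (nhds 0) := by
      have h0' : Tendsto (fun β : ℝ => β⁻¹ * β⁻¹) atTop (nhds 0) := by
        simpa using (tendsto_inv_atTop_zero : Tendsto (fun β : ℝ => β⁻¹) atTop (nhds 0)).mul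
          (tendsto_inv_atTop_zero : Tendsto (fun β : ℝ => β⁻¹) atTop (nhds 0))
      refine h0'.congr fun β => ?_
      rw [sq, mul_inv]
    have ha : Tendsto (fun β : ℝ => dissip B β (F.w j β) - F.d j * β⁻¹) atTop (nhds 0) :=
      (key_low j hj).trans_tendsto h0
    have hb : Tendsto (fun β : ℝ => F.d j * β⁻¹) atTop (nhds (0 : ℝ)) := by
      simpa using tendsto_inv_atTop_zero.const_mul (F.d j)
    have hc := ha.add hb
    simp only [sub_add_cancel, add_zero] at hc
    exact hc
end
end
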